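/- arXiv:1407.0503 — 2 statements merged into one kernel-verified Lean document; each statement's English description precedes it below -/
import Mathlib

section
/- Let X be a completely regular Hausdorff topological space and let E be a nonempty subspace of X that is separable and completely metrizable. Then E is an H₁-retract of X. -/
/-- A set is an Fσ-set if it is a countable union of closed sets. -/
def IsFsigma {X : Type*} [TopologicalSpace X] (A : Set X) : Prop :=
  ∃ F : ℕ → Set X, (∀ n, IsClosed (F n)) ∧ A = ⋃ n, F n

/-- A mapping is of the first Lebesgue class if the preimage of every open set is Fσ. -/
def LebesgueClassOne {X Y : Type*} [TopologicalSpace X] [TopologicalSpace Y] (g : X → Y) : Prop :=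
  ∀ V : Set Y, IsOpen V → IsFsigma (g ⁻¹' V)

/-- `E` is an H₁-retract of `X` if there is a first Lebesgue class map `r : X → E`
fixing the points of `E`. -/
def IsH1Retract {X : Type*} [TopologicalSpace X] (E : Set X) : Prop :=
  ∃ r : X → E, (∀ x : E, r x = x) ∧ LebesgueClassOne r
/-- A topological space is completely metrizable if its topology is induced by some
complete metric. -/
def CompletelyMetrizable (X : Type*) [t : TopologicalSpace X] : Prop :=
  ∃ m : MetricSpace X, m.toUniformSpace.toTopologicalSpace = t ∧ @CompleteSpace X m.toUniformSpace

open Set Filter Topology Metric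

section FsigmaLemmas

variable {X : Type*} [TopologicalSpace X]

lemma IsClosed.isFsigma' {A : Set X} (h : IsClosed A) : IsFsigma A :=
  ⟨fun _ => A, fun _ => h, (iUnion_const A).symm⟩

lemma isFsigma_empty' : IsFsigma (∅ : Set X) := isClosed_empty.isFsigma'

lemma isFsigma_univ' : IsFsigma (univ : Set X) := isClosed_univ.isFsigma'

lemma isFsigma_iUnion_isClosed' {ι : Type*} [Countable ι] {f : ι → Set X}
    (h : ∀ i, IsClosed (f i)) : IsFsigma (⋃ i, f i) := by
  rcases isEmpty_or_nonempty ι with hι | hι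
  · simpa using isFsigma_empty'
  · obtain ⟨g, hg⟩ := exists_surjective_nat ι
    refine ⟨fun n => f (g n), fun n => h _, ?_⟩
    ext x; simp only [mem_iUnion]
    constructor
    · rintro ⟨i, hi⟩
      obtain ⟨n, rfl⟩ := hg i
      exact ⟨n, hi⟩
    · rintro ⟨n, hn⟩
      exact ⟨g n, hn⟩

lemma isFsigma_iUnion' {ι : Type*} [Countable ι] {f : ι → Set X}
    (h : ∀ i, IsFsigma (f i)) : IsFsigma (⋃ i, f i) := by
  choose F hF hFeq using h
  have : ⋃ i, f i = ⋃ p : ι × ℕ, F p.1 p.2 := by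
    ext x; simp only [mem_iUnion, Prod.exists]
    constructor
    · rintro ⟨i, hi⟩
      rw [hFeq i] at hi
      obtain ⟨n, hn⟩ := mem_iUnion.1 hi
      exact ⟨i, n, hn⟩
    · rintro ⟨i, n, hn⟩
      exact ⟨i, (hFeq i).symm ▸ mem_iUnion.2 ⟨n, hn⟩⟩
  rw [this]
  exact isFsigma_iUnion_isClosed' fun p => hF p.1 p.2

lemma IsFsigma.union' {A B : Set X} (hA : IsFsigma A) (hB : IsFsigma B) :
    IsFsigma (A ∪ B) := by
  rw [union_eq_iUnion]
  exact isFsigma_iUnion' (by rintro (_|_) <;> simpa)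

lemma IsFsigma.inter' {A B : Set X} (hA : IsFsigma A) (hB : IsFsigma B) :
    IsFsigma (A ∩ B) := by
  obtain ⟨F, hF, rfl⟩ := hA
  obtain ⟨G, hG, rfl⟩ := hB
  have : (⋃ n, F n) ∩ ⋃ n, G n = ⋃ p : ℕ × ℕ, F p.1 ∩ G p.2 := by
    ext x
    simp only [mem_inter_iff, mem_iUnion, Prod.exists]
    exact ⟨fun ⟨⟨n, hn⟩, ⟨m, hm⟩⟩ => ⟨n, m, hn, hm⟩, fun ⟨n, m, hn, hm⟩ => ⟨⟨n, hn⟩, ⟨m, hm⟩⟩⟩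
  rw [this]
  exact isFsigma_iUnion_isClosed' fun p => (hF p.1).inter (hG p.2)

/-- In a completely regular space, every point of an open set has an open Fσ
(cozero) neighborhood inside it. -/
lemma exists_isOpen_isFsigma_subset' [CompletelyRegularSpace X] {x : X} {W : Set X}
    (hW : IsOpen W) (hx : x ∈ W) :
    ∃ C : Set X, IsOpen C ∧ IsFsigma C ∧ x ∈ C ∧ C ⊆ W := by
  obtain ⟨f, hf, hfx, hfK⟩ := CompletelyRegularSpace.completely_regular x Wᶜ
    hW.isClosed_compl (fun h => h hx)
  set g : X → ℝ := fun y => (f y : ℝ) with hg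
  have hgc : Continuous g := continuous_subtype_val.comp hf
  refine ⟨g ⁻¹' Iio (1/2 : ℝ), (isOpen_Iio).preimage hgc, ?_, ?_, ?_⟩
  · refine ⟨fun n => g ⁻¹' Iic (1/2 - 1/(n+1)), fun n => (isClosed_Iic).preimage hgc, ?_⟩
    ext y
    simp only [mem_preimage, mem_Iio, mem_iUnion, mem_Iic]
    constructor
    · intro hy
      obtain ⟨n, hn⟩ := exists_nat_one_div_lt (show (0:ℝ) < 1/2 - g y by linarith)
      exact ⟨n, by linarith⟩
    · rintro ⟨n, hn⟩
      have : (0:ℝ) < 1/(n+1) := by positivity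
      linarith
  · simp only [mem_preimage, mem_Iio, hg, hfx]
    norm_num
  · intro y hy
    by_contra h
    have := hfK (h : y ∈ Wᶜ)
    simp only [mem_preimage, mem_Iio, hg] at hy
    rw [Pi.one_apply] at this
    rw [this] at hy
    norm_num at hy

end FsigmaLemmas

section Retract

open Set Filter Topology Metric

set_option linter.unusedSectionVars false

variable {X : Type*} [TopologicalSpace X] {Y : Type*} [MetricSpace Y]
variable (j : Y → X) (u : ℕ → ℕ → Set X)

/-- The cell determined by a finite sequence of indices (most recent index first). -/
def H1cell : List ℕ → Set X
  | [] => Set.univ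
  | n :: s => u s.length n ∩ H1cell s

open Classical in
/-- Pick a point of `Y` whose image lies in the given cell, if possible. -/
noncomputable def H1q [Nonempty Y] (s : List ℕ) : Y :=
  if h : ∃ y : Y, j y ∈ H1cell u s then h.choose else Classical.arbitrary Y

/-- The condition for the greedy selection at a given step. -/
def H1P (s : List ℕ) (x : X) (n : ℕ) : Prop :=
  x ∈ u s.length n ∧ ∃ y : Y, j y ∈ u s.length n ∩ H1cell u s

open Classical in
/-- The greedy branch of a point. -/
noncomputable def H1branch (x : X) : ℕ → Option (List ℕ)
  | 0 => some []
  | (k+1) => (H1branch x k).bind fun s =>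
      if h : ∃ n, H1P j u s x n then some (Nat.find h :: s) else none

lemma H1cell_append (s t : List ℕ) : H1cell u (s ++ t) ⊆ H1cell u t := by
  induction s with
  | nil => simp [H1cell]
  | cons n s ih => exact fun x hx => ih (hx.2 : _)

lemma H1q_mem [Nonempty Y] {s : List ℕ} (h : ∃ y : Y, j y ∈ H1cell u s) :
    j (H1q j u s) ∈ H1cell u s := by
  rw [H1q, dif_pos h]; exact h.choose_spec

lemma H1branch_zero (x : X) : H1branch j u x 0 = some [] := rfl

lemma H1branch_succ_some {x : X} {k : ℕ} {s' : List ℕ}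
    (h : H1branch j u x (k+1) = some s') :
    ∃ s n, H1branch j u x k = some s ∧ s' = n :: s ∧ H1P j u s x n ∧
      ∀ m < n, ¬ H1P j u s x m := by
  classical
  rw [H1branch] at h
  obtain ⟨s, hs, hbind⟩ := Option.bind_eq_some_iff.1 h
  by_cases hn : ∃ n, H1P j u s x n
  · rw [dif_pos hn] at hbind
    exact ⟨s, _, hs, (Option.some_inj.1 hbind).symm, Nat.find_spec hn,
      fun m hm => Nat.find_min hn hm⟩
  · rw [dif_neg hn] at hbind
    exact absurd hbind (by simp)

lemma H1branch_succ_of_ex {x : X} {k : ℕ} {s : List ℕ}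
    (h : H1branch j u x k = some s) (hn : ∃ n, H1P j u s x n) :
    ∃ s', H1branch j u x (k+1) = some s' := by
  rw [H1branch, h, Option.bind_some, dif_pos hn]
  exact ⟨_, rfl⟩

lemma H1branch_succ_none_iff {x : X} {k : ℕ} {s : List ℕ}
    (h : H1branch j u x k = some s) :
    H1branch j u x (k+1) = none ↔ ¬ ∃ n, H1P j u s x n := by
  constructor
  · intro hnone hn
    obtain ⟨s', hs'⟩ := H1branch_succ_of_ex j u h hn
    rw [hs'] at hnone
    exact absurd hnone (by simp)
  · intro hn
    rw [H1branch, h, Option.bind_some, dif_neg hn]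

lemma H1branch_cons_iff {x : X} {n : ℕ} {s : List ℕ} :
    H1branch j u x (s.length + 1) = some (n :: s) ↔
      H1branch j u x s.length = some s ∧ H1P j u s x n ∧ ∀ m < n, ¬ H1P j u s x m := by
  constructor
  · intro h
    obtain ⟨t, n', ht, heq, hP, hmin⟩ := H1branch_succ_some j u h
    obtain ⟨rfl, rfl⟩ : n' = n ∧ t = s := by
      have := List.cons.injEq n' t n s ▸ heq.symm
      exact ⟨(List.cons.injEq .. ▸ heq.symm : _ ∧ _).1, (List.cons.injEq .. ▸ heq.symm : _ ∧ _).2⟩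
    exact ⟨ht, hP, hmin⟩
  · classical
    rintro ⟨hb, hP, hmin⟩
    have hn : ∃ m, H1P j u s x m := ⟨n, hP⟩
    rw [H1branch, hb, Option.bind_some, dif_pos hn]
    have : Nat.find hn = n := (Nat.find_eq_iff hn).2 ⟨hP, hmin⟩
    rw [this]

lemma H1branch_length {x : X} : ∀ {k : ℕ} {s : List ℕ},
    H1branch j u x k = some s → s.length = k := by
  intro k
  induction k with
  | zero => intro s h; rw [H1branch_zero] at h; simp [← Option.some_inj.1 h]
  | succ k ih =>
    intro s h
    obtain ⟨t, n, ht, rfl, _, _⟩ := H1branch_succ_some j u h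
    simp [ih ht]

lemma H1branch_mem [Nonempty Y] {x : X} : ∀ {k : ℕ} {s : List ℕ},
    H1branch j u x k = some s → x ∈ H1cell u s ∧ ∃ y : Y, j y ∈ H1cell u s := by
  intro k
  induction k with
  | zero =>
    intro s h; rw [H1branch_zero] at h
    rw [← Option.some_inj.1 h]
    exact ⟨Set.mem_univ x, Classical.arbitrary Y, Set.mem_univ _⟩
  | succ k ih =>
    intro s h
    obtain ⟨t, n, ht, rfl, hP, _⟩ := H1branch_succ_some j u h
    refine ⟨⟨hP.1, (ih ht).1⟩, ?_⟩
    obtain ⟨y, hy⟩ := hP.2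
    exact ⟨y, hy⟩

lemma H1branch_none_succ {x : X} {k : ℕ} (h : H1branch j u x k = none) :
    H1branch j u x (k+1) = none := by
  rw [H1branch, h, Option.bind_none]

lemma H1branch_mono {x : X} {k m : ℕ} (hkm : k ≤ m) {s : List ℕ}
    (h : H1branch j u x m = some s) :
    ∃ t pre, H1branch j u x k = some t ∧ s = pre ++ t := by
  induction m generalizing s with
  | zero =>
    obtain rfl : k = 0 := Nat.le_zero.1 hkm
    exact ⟨s, [], h, rfl⟩
  | succ m ih =>
    rcases Nat.eq_or_lt_of_le hkm with rfl | hlt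
    · exact ⟨s, [], h, rfl⟩
    · obtain ⟨t, n, ht, rfl, _, _⟩ := H1branch_succ_some j u h
      obtain ⟨t', pre, ht', rfl⟩ := ih (Nat.lt_succ_iff.1 hlt) ht
      exact ⟨t', n :: pre, ht', rfl⟩

end Retract

section Retract2

open Set Filter Topology Metric

set_option linter.unusedSectionVars false

variable {X : Type*} [TopologicalSpace X] {Y : Type*} [MetricSpace Y]
variable (j : Y → X) (u : ℕ → ℕ → Set X)

/-- The approximating sequence of a point. -/
noncomputable def H1seq [Nonempty Y] (x : X) (k : ℕ) : Y :=
  (H1branch j u x k).elim (Classical.arbitrary Y) (H1q j u)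

/-- A point "stops" if its greedy branch terminates. -/
def H1stops (x : X) : Prop := ∃ k, H1branch j u x (k+1) = none

open Classical in
/-- The retraction map. -/
noncomputable def H1r [Nonempty Y] (x : X) : Y :=
  if h : H1stops j u x then H1seq j u x (Nat.find h) else limUnder atTop (H1seq j u x)

variable {j u}
variable (hdiam : ∀ k n (a b : Y), j a ∈ u k n → j b ∈ u k n → dist a b ≤ (1/2)^k)

lemma H1seq_eq [Nonempty Y] {x : X} {k : ℕ} {s : List ℕ}
    (h : H1branch j u x k = some s) : H1seq j u x k = H1q j u s := by
  rw [H1seq, h]; rfl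

include hdiam

lemma H1dist_cell [Nonempty Y] {n : ℕ} {s : List ℕ} {a b : Y}
    (ha : j a ∈ H1cell u (n :: s)) (hb : j b ∈ H1cell u (n :: s)) :
    dist a b ≤ (1/2)^s.length :=
  hdiam s.length n a b ha.1 hb.1

omit hdiam in
/-- If a point does not stop, then its branch is defined at every level. -/
lemma H1no_stop_some {x : X} (hx : ¬ H1stops j u x) (k : ℕ) :
    ∃ s, H1branch j u x k = some s := by
  cases hbk : H1branch j u x k with
  | none =>
    exfalso
    cases k with
    | zero => rw [H1branch_zero] at hbk; exact absurd hbk (by simp)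
    | succ k => exact hx ⟨k, hbk⟩
  | some s => exact ⟨s, rfl⟩

lemma H1seq_dist [Nonempty Y] {x : X} {k m : ℕ} (hk : 1 ≤ k) (hkm : k ≤ m)
    {s t : List ℕ} (hbk : H1branch j u x k = some s) (hbm : H1branch j u x m = some t) :
    dist (H1seq j u x m) (H1q j u s) ≤ (1/2)^(k-1) := by
  obtain ⟨s', pre, hbk', ht⟩ := H1branch_mono j u hkm hbm
  have hss : s' = s := by rw [hbk'] at hbk; exact Option.some_inj.1 hbk
  subst hss
  subst ht
  have hlenk : s'.length = k := H1branch_length j u hbk'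
  obtain ⟨n, s₀, rfl⟩ : ∃ n s₀, s' = n :: s₀ := by
    cases s' with
    | nil => simp at hlenk; omega
    | cons n s₀ => exact ⟨n, s₀, rfl⟩
  have hlen : s₀.length = k - 1 := by simp at hlenk; omega
  rw [H1seq_eq hbm, ← hlen]
  have hqt : j (H1q j u (pre ++ n :: s₀)) ∈ H1cell u (pre ++ n :: s₀) :=
    H1q_mem j u (H1branch_mem j u hbm).2
  have hqs : j (H1q j u (n :: s₀)) ∈ H1cell u (n :: s₀) :=
    H1q_mem j u (H1branch_mem j u hbk').2
  exact H1dist_cell hdiam (H1cell_append u pre _ hqt) hqs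

lemma H1cauchy [Nonempty Y] {x : X} (hx : ¬ H1stops j u x) :
    CauchySeq (H1seq j u x) := by
  rw [Metric.cauchySeq_iff']
  intro ε hε
  obtain ⟨k₀, hk₀⟩ := exists_pow_lt_of_lt_one hε (by norm_num : (1:ℝ)/2 < 1)
  refine ⟨k₀ + 1, fun m hm => ?_⟩
  obtain ⟨s, hbk⟩ := H1no_stop_some hx (k₀ + 1)
  obtain ⟨t, hbm⟩ := H1no_stop_some hx m
  calc dist (H1seq j u x m) (H1seq j u x (k₀+1))
      = dist (H1seq j u x m) (H1q j u s) := by rw [H1seq_eq hbk]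
    _ ≤ (1/2)^(k₀+1-1) := H1seq_dist hdiam (Nat.le_add_left 1 k₀) hm hbk hbm
    _ < ε := by simpa using hk₀

lemma H1tendsto [Nonempty Y] [CompleteSpace Y] {x : X} (hx : ¬ H1stops j u x) :
    Tendsto (H1seq j u x) atTop (𝓝 (H1r j u x)) := by
  obtain ⟨a, ha⟩ := cauchySeq_tendsto_of_complete (H1cauchy hdiam hx)
  rw [H1r, dif_neg hx, ha.limUnder_eq]
  exact ha

/-- The key quantitative estimate. -/
lemma H1r_dist [Nonempty Y] [CompleteSpace Y] {x : X} {k : ℕ} (hk : 1 ≤ k)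
    {s : List ℕ} (hb : H1branch j u x k = some s) :
    dist (H1r j u x) (H1q j u s) ≤ (1/2)^(k-1) := by
  by_cases hx : H1stops j u x
  · classical
    rw [H1r, dif_pos hx]
    have hk₀k : k ≤ Nat.find hx := by
      by_contra hlt
      push_neg at hlt
      have h1 : H1branch j u x (Nat.find hx + 1) = none := Nat.find_spec hx
      obtain ⟨t, pre, hbt, _⟩ := H1branch_mono j u (show Nat.find hx + 1 ≤ k by omega) hb
      rw [hbt] at h1
      exact absurd h1 (by simp)
    obtain ⟨t, hbt⟩ : ∃ t, H1branch j u x (Nat.find hx) = some t := by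
      cases hbt : H1branch j u x (Nat.find hx) with
      | none =>
        exfalso
        have h0 : Nat.find hx ≠ 0 := by
          intro h0
          rw [h0, H1branch_zero] at hbt
          exact absurd hbt (by simp)
        have hlt : Nat.find hx - 1 < Nat.find hx := by omega
        have hmin := Nat.find_min hx hlt
        rw [show Nat.find hx - 1 + 1 = Nat.find hx by omega] at hmin
        exact hmin hbt
      | some t => exact ⟨t, rfl⟩
    exact H1seq_dist hdiam hk hk₀k hb hbt
  · have hT := H1tendsto hdiam hx
    have hbound : ∀ᶠ m in atTop, dist (H1seq j u x m) (H1q j u s) ≤ (1/2)^(k-1) := by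
      filter_upwards [eventually_ge_atTop k] with m hm
      obtain ⟨t, hbm⟩ := H1no_stop_some hx m
      exact H1seq_dist hdiam hk hm hb hbm
    exact le_of_tendsto (hT.dist tendsto_const_nhds) hbound

end Retract2

section Retract3

open Set Filter Topology Metric

set_option linter.unusedSectionVars false

variable {X : Type*} [TopologicalSpace X] {Y : Type*} [MetricSpace Y]
variable {j : Y → X} {u : ℕ → ℕ → Set X}

lemma isFsigma_iUnion_prop {p : Prop} {A : Set X} (h : IsFsigma A) :
    IsFsigma (⋃ (_ : p), A) := by
  by_cases hp : p
  · simp [hp, h]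
  · simp [hp, isFsigma_empty']

lemma H1notP_closed (hopen : ∀ k n, IsOpen (u k n)) (s : List ℕ) (m : ℕ) :
    IsClosed {x : X | ¬ H1P j u s x m} := by
  by_cases hC : ∃ y : Y, j y ∈ u s.length m ∩ H1cell u s
  · have : {x : X | ¬ H1P j u s x m} = (u s.length m)ᶜ := by
      ext x
      constructor
      · exact fun hn hxu => hn ⟨hxu, hC⟩
      · exact fun hxu h => hxu h.1
    rw [this]; exact (hopen _ _).isClosed_compl
  · have : {x : X | ¬ H1P j u s x m} = univ := by
      ext x; simp only [mem_setOf_eq, mem_univ, iff_true, H1P, not_and]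
      exact fun _ => hC
    rw [this]; exact isClosed_univ

lemma H1A_isFsigma (hopen : ∀ k n, IsOpen (u k n)) (hfs : ∀ k n, IsFsigma (u k n))
    (s : List ℕ) : IsFsigma {x : X | H1branch j u x s.length = some s} := by
  induction s with
  | nil =>
    have : {x : X | H1branch j u x ([] : List ℕ).length = some []} = univ := by
      ext x; simp [H1branch_zero]
    rw [this]; exact isFsigma_univ'
  | cons n s ih =>
    have heq : {x : X | H1branch j u x (n::s).length = some (n::s)} =
        ({x : X | H1branch j u x s.length = some s} ∩ {x | H1P j u s x n}) ∩
          ⋂ m, ⋂ (_ : m < n), {x | ¬ H1P j u s x m} := by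
      ext x
      show H1branch j u x (s.length + 1) = some (n :: s) ↔ _
      rw [H1branch_cons_iff]
      simp only [mem_inter_iff, mem_setOf_eq, mem_iInter]
      tauto
    rw [heq]
    refine (ih.inter' ?_).inter' ?_
    · by_cases hC : ∃ y : Y, j y ∈ u s.length n ∩ H1cell u s
      · have : {x : X | H1P j u s x n} = u s.length n := by
          ext x
          exact ⟨fun h => h.1, fun h => ⟨h, hC⟩⟩
        rw [this]; exact hfs _ _
      · have : {x : X | H1P j u s x n} = ∅ := by
          ext x; simp only [mem_setOf_eq, mem_empty_iff_false, iff_false, H1P, not_and]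
          exact fun _ => hC
        rw [this]; exact isFsigma_empty'
    · exact IsClosed.isFsigma'
        (isClosed_iInter fun m => isClosed_iInter fun _ => H1notP_closed hopen s m)

lemma H1D_isFsigma (hopen : ∀ k n, IsOpen (u k n)) (hfs : ∀ k n, IsFsigma (u k n))
    (s : List ℕ) :
    IsFsigma {x : X | H1branch j u x s.length = some s ∧
      H1branch j u x (s.length + 1) = none} := by
  have heq : {x : X | H1branch j u x s.length = some s ∧
      H1branch j u x (s.length + 1) = none} =
      {x : X | H1branch j u x s.length = some s} ∩ ⋂ m, {x | ¬ H1P j u s x m} := by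
    ext x
    simp only [mem_setOf_eq, mem_inter_iff, mem_iInter]
    constructor
    · rintro ⟨hA, hnone⟩
      have := (H1branch_succ_none_iff j u hA).1 hnone
      push_neg at this
      exact ⟨hA, this⟩
    · rintro ⟨hA, hall⟩
      exact ⟨hA, (H1branch_succ_none_iff j u hA).2 (by push_neg; exact hall)⟩
  rw [heq]
  exact (H1A_isFsigma hopen hfs s).inter'
    (IsClosed.isFsigma' (isClosed_iInter fun m => H1notP_closed hopen s m))

variable (hdiam : ∀ k n (a b : Y), j a ∈ u k n → j b ∈ u k n → dist a b ≤ (1/2)^k)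

/-- The value of the retraction on the "stopping" set of a sequence. -/
lemma H1r_eq_on_D [Nonempty Y] {x : X} {s : List ℕ}
    (hb : H1branch j u x s.length = some s)
    (hnone : H1branch j u x (s.length + 1) = none) :
    H1r j u x = H1q j u s := by
  classical
  have hx : H1stops j u x := ⟨s.length, hnone⟩
  rw [H1r, dif_pos hx]
  have hfind : Nat.find hx = s.length := by
    refine (Nat.find_eq_iff hx).2 ?_
    refine ⟨hnone, fun m hm hmnone => ?_⟩
    obtain ⟨t, pre, hbt, _⟩ := H1branch_mono j u (show m + 1 ≤ s.length by omega) hb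
    rw [hbt] at hmnone
    exact absurd hmnone (by simp)
  rw [hfind, H1seq_eq hb]

lemma H1stops_cases [Nonempty Y] {x : X} (hx : H1stops j u x) :
    ∃ t : List ℕ, H1branch j u x t.length = some t ∧
      H1branch j u x (t.length + 1) = none ∧ H1r j u x = H1q j u t := by
  classical
  obtain ⟨t, hbt⟩ : ∃ t, H1branch j u x (Nat.find hx) = some t := by
    cases hbt : H1branch j u x (Nat.find hx) with
    | none =>
      exfalso
      have h0 : Nat.find hx ≠ 0 := by
        intro h0
        rw [h0, H1branch_zero] at hbt
        exact absurd hbt (by simp)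
      have hlt : Nat.find hx - 1 < Nat.find hx := by omega
      have hmin := Nat.find_min hx hlt
      rw [show Nat.find hx - 1 + 1 = Nat.find hx by omega] at hmin
      exact hmin hbt
    | some t => exact ⟨t, rfl⟩
  have hlen : t.length = Nat.find hx := H1branch_length j u hbt
  have hb : H1branch j u x t.length = some t := by rw [hlen]; exact hbt
  have hnone : H1branch j u x (t.length + 1) = none := by
    rw [hlen]; exact Nat.find_spec hx
  exact ⟨t, hb, hnone, H1r_eq_on_D hb hnone⟩

include hdiam

/-- Points in the image never stop, and the retraction fixes them. -/
lemma H1r_fix [Nonempty Y] [CompleteSpace Y]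
    (hcov : ∀ (k : ℕ) (y : Y), ∃ n, j y ∈ u k n) (y : Y) :
    H1r j u (j y) = y := by
  have hsome : ∀ k, ∃ s, H1branch j u (j y) k = some s := by
    intro k
    induction k with
    | zero => exact ⟨[], H1branch_zero j u _⟩
    | succ k ih =>
      obtain ⟨s, hs⟩ := ih
      have hlen : s.length = k := H1branch_length j u hs
      obtain ⟨n, hn⟩ := hcov s.length y
      have hmem : j y ∈ H1cell u s := (H1branch_mem j u hs).1
      exact H1branch_succ_of_ex j u hs ⟨n, hn, y, hn, hmem⟩
  have hnostop : ¬ H1stops j u (j y) := by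
    rintro ⟨k, hk⟩
    obtain ⟨s, hs⟩ := hsome (k+1)
    rw [hs] at hk
    exact absurd hk (by simp)
  have hty : Tendsto (H1seq j u (j y)) atTop (𝓝 y) := by
    rw [Metric.tendsto_atTop]
    intro ε hε
    obtain ⟨k₀, hk₀⟩ := exists_pow_lt_of_lt_one hε (by norm_num : (1:ℝ)/2 < 1)
    refine ⟨k₀ + 1, fun k hk => ?_⟩
    obtain ⟨s, hs⟩ := hsome k
    have hlen : s.length = k := H1branch_length j u hs
    obtain ⟨n, s₀, rfl⟩ : ∃ n s₀, s = n :: s₀ := by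
      cases s with
      | nil => simp at hlen; omega
      | cons n s₀ => exact ⟨n, s₀, rfl⟩
    have hq : j (H1q j u (n :: s₀)) ∈ H1cell u (n :: s₀) :=
      H1q_mem j u (H1branch_mem j u hs).2
    have hyy : j y ∈ H1cell u (n :: s₀) := (H1branch_mem j u hs).1
    have hd : dist (H1seq j u (j y) k) y ≤ (1/2)^s₀.length := by
      rw [H1seq_eq hs]
      exact H1dist_cell hdiam hq hyy
    calc dist (H1seq j u (j y) k) y ≤ (1/2)^s₀.length := hd
      _ ≤ (1/2)^k₀ := by
          apply pow_le_pow_of_le_one (by norm_num) (by norm_num)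
          simp at hlen; omega
      _ < ε := hk₀
  exact tendsto_nhds_unique (H1tendsto hdiam hnostop) hty

/-- The main abstract theorem. -/
theorem H1main [Nonempty Y] [CompleteSpace Y]
    (hopen : ∀ k n, IsOpen (u k n)) (hfs : ∀ k n, IsFsigma (u k n))
    (hcov : ∀ (k : ℕ) (y : Y), ∃ n, j y ∈ u k n) :
    ∃ r : X → Y, (∀ y, r (j y) = y) ∧
      ∀ V : Set Y, (∀ v ∈ V, ∃ ε > 0, Metric.ball v ε ⊆ V) → IsFsigma (r ⁻¹' V) := by
  classical
  refine ⟨H1r j u, H1r_fix hdiam hcov, fun V hV => ?_⟩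
  have hdecomp : H1r j u ⁻¹' V =
      (⋃ (s : List ℕ), ⋃ (_ : s ≠ [] ∧ ∀ z : Y,
          dist z (H1q j u s) ≤ (1/2)^(s.length - 1) → z ∈ V),
        {x : X | H1branch j u x s.length = some s}) ∪
      (⋃ (s : List ℕ), ⋃ (_ : H1q j u s ∈ V),
        {x : X | H1branch j u x s.length = some s ∧
          H1branch j u x (s.length + 1) = none}) := by
    ext x
    simp only [mem_preimage, mem_union, mem_iUnion, mem_setOf_eq]
    constructor
    · intro hrx
      by_cases hx : H1stops j u x
      · obtain ⟨t, hb, hnone, hrt⟩ := H1stops_cases hx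
        exact Or.inr ⟨t, hrt ▸ hrx, hb, hnone⟩
      · obtain ⟨ε, hε, hball⟩ := hV _ hrx
        obtain ⟨k₀, hk₀⟩ := exists_pow_lt_of_lt_one (by linarith : (0:ℝ) < ε/2)
          (by norm_num : (1:ℝ)/2 < 1)
        obtain ⟨s, hs⟩ := H1no_stop_some hx (k₀ + 1)
        have hlen : s.length = k₀ + 1 := H1branch_length j u hs
        have hb : H1branch j u x s.length = some s := by rw [hlen]; exact hs
        refine Or.inl ⟨s, ⟨?_, fun z hz => ?_⟩, hb⟩
        · intro h0; rw [h0] at hlen; simp at hlen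
        · apply hball
          rw [Metric.mem_ball]
          have hrd : dist (H1r j u x) (H1q j u s) ≤ (1/2)^(k₀ + 1 - 1) :=
            H1r_dist hdiam (by omega) hs
          rw [hlen] at hz
          calc dist z (H1r j u x)
              ≤ dist z (H1q j u s) + dist (H1q j u s) (H1r j u x) := dist_triangle _ _ _
            _ ≤ (1/2)^(k₀+1-1) + (1/2)^(k₀+1-1) := by
                rw [dist_comm (H1q j u s)]; exact add_le_add hz hrd
            _ < ε := by simp only [Nat.add_sub_cancel]; linarith
    · rintro (⟨s, ⟨hs0, hsV⟩, hb⟩ | ⟨s, hqV, hb, hnone⟩)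
      · apply hsV
        apply H1r_dist hdiam _ hb
        cases s with
        | nil => exact absurd rfl hs0
        | cons n s₀ => simp
      · rw [H1r_eq_on_D hb hnone]
        exact hqV
  rw [hdecomp]
  refine IsFsigma.union' ?_ ?_
  · exact isFsigma_iUnion' fun s => isFsigma_iUnion_prop (H1A_isFsigma hopen hfs s)
  · exact isFsigma_iUnion' fun s => isFsigma_iUnion_prop (H1D_isFsigma hopen hfs s)

end Retract3


/-- A nonempty separable completely metrizable subspace of a completely regular Hausdorff
space is an H₁-retract. -/
theorem isH1Retract_of_separable_completelyMetrizable {X : Type*} [TopologicalSpace X]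
    [CompletelyRegularSpace X] [T2Space X]
    (E : Set X) (hne : E.Nonempty) [TopologicalSpace.SeparableSpace E]
    (hcm : CompletelyMetrizable E) :
    IsH1Retract E := by
  classical
  obtain ⟨e₀, he₀⟩ := hne
  haveI : Nonempty ↥E := ⟨⟨e₀, he₀⟩⟩
  obtain ⟨m, hm, hcomp⟩ := hcm
  letI mE : MetricSpace ↥E := m.replaceTopology hm.symm
  haveI : CompleteSpace ↥E := by
    have h : mE = m := MetricSpace.replaceTopology_eq m hm.symm
    have h2 : mE.toUniformSpace = m.toUniformSpace := by rw [h]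
    exact h2 ▸ hcomp
  haveI : SecondCountableTopology ↥E := UniformSpace.secondCountable_of_separable ↥E
  -- construct the covers
  have hcoz : ∀ k : ℕ, ∃ w : ℕ → Set X,
      (∀ n, IsOpen (w n)) ∧ (∀ n, IsFsigma (w n)) ∧ (∀ y : ↥E, ∃ n, ↑y ∈ w n) ∧
      (∀ n (a b : ↥E), ↑a ∈ w n → ↑b ∈ w n → dist a b ≤ (1/2)^k) := by
    intro k
    have hhalf : (0:ℝ) < (1/2)^k / 2 := by positivity
    have hC : ∀ y : ↥E, ∃ C : Set X, IsOpen C ∧ IsFsigma C ∧ ↑y ∈ C ∧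
        ((Subtype.val : ↥E → X) ⁻¹' C : Set ↥E) ⊆ Metric.ball y ((1/2)^k / 2) := by
      intro y
      have hball : IsOpen (Metric.ball y ((1/2)^k/2)) := Metric.isOpen_ball
      obtain ⟨W, hW, hWeq⟩ := isOpen_induced_iff.1 hball
      obtain ⟨C, hCo, hCf, hyC, hCW⟩ := exists_isOpen_isFsigma_subset' hW (by
        have : y ∈ ((Subtype.val : ↥E → X) ⁻¹' W : Set ↥E) := by
          rw [hWeq]; exact Metric.mem_ball_self hhalf
        exact this)
      refine ⟨C, hCo, hCf, hyC, fun a ha => ?_⟩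
      rw [← hWeq]
      exact Set.mem_preimage.2 (hCW ha)
    choose C hCo hCf hyC hCb using hC
    obtain ⟨T, hTc, hTeq⟩ := TopologicalSpace.isOpen_iUnion_countable
        (fun y : ↥E => ((Subtype.val : ↥E → X) ⁻¹' (C y) : Set ↥E))
        (fun y => (hCo y).preimage continuous_subtype_val)
    have hcover : ∀ y : ↥E, ∃ t ∈ T, y ∈ ((Subtype.val : ↥E → X) ⁻¹' (C t) : Set ↥E) := by
      intro y
      have : y ∈ ⋃ t ∈ T, ((Subtype.val : ↥E → X) ⁻¹' (C t) : Set ↥E) := by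
        rw [hTeq]
        exact Set.mem_iUnion.2 ⟨y, Set.mem_preimage.2 (hyC y)⟩
      simpa using this
    have hTne : T.Nonempty := by
      obtain ⟨t, ht, _⟩ := hcover (Classical.arbitrary ↥E)
      exact ⟨t, ht⟩
    obtain ⟨g, hg⟩ := hTc.exists_eq_range hTne
    refine ⟨fun n => C (g n), fun n => hCo _, fun n => hCf _, ?_, ?_⟩
    · intro y
      obtain ⟨t, ht, hyt⟩ := hcover y
      rw [hg] at ht
      obtain ⟨n, rfl⟩ := ht
      exact ⟨n, hyt⟩
    · intro n a b ha hb
      have ha' := hCb (g n) (Set.mem_preimage.2 ha)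
      have hb' := hCb (g n) (Set.mem_preimage.2 hb)
      rw [Metric.mem_ball] at ha' hb'
      calc dist a b ≤ dist a (g n) + dist (g n) b := dist_triangle _ _ _
        _ ≤ (1/2)^k/2 + (1/2)^k/2 := by
            rw [dist_comm (g n) b]; exact add_le_add ha'.le hb'.le
        _ = (1/2)^k := by ring
  choose w hwo hwf hwcov hwdiam using hcoz
  obtain ⟨r, hrfix, hrpre⟩ := H1main (j := (Subtype.val : ↥E → X)) (u := w)
    (fun k n a b ha hb => hwdiam k n a b ha hb) hwo hwf (fun k y => hwcov k y)
  refine ⟨r, fun x => hrfix x, ?_⟩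
  intro V hVopen
  exact hrpre V (fun v hv => Metric.isOpen_iff.1 hVopen v hv)
end

section
/- Let X be the set [0,1] × {0,1} endowed with the order topology of the lexicographic order (where (x,i) < (y,j) iff x < y, or x = y and i < j). Then the mapping r : X → X defined by r(x,i) = (x,0) is of the first Lebesgue class: for every open set V ⊆ X, the preimage r⁻¹(V) is an Fσ-set in X. -/
/-- The double arrow space: `[0,1] × {0,1}` with the order topology of the
lexicographic order. -/
abbrev DoubleArrow : Type := ↥(Set.Icc (0:ℝ) 1) ×ₗ Fin 2

noncomputable instance : TopologicalSpace DoubleArrow := Preorder.topology DoubleArrow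

instance : OrderTopology DoubleArrow := ⟨rfl⟩

/-! ### Auxiliary lemmas -/

/-- First coordinate of a point of the double arrow space, as a real number. -/
def daFst (p : DoubleArrow) : ℝ := ((ofLex p).1 : ℝ)

lemma daFst_mem (p : DoubleArrow) : daFst p ∈ Set.Icc (0:ℝ) 1 := (ofLex p).1.2

lemma daFst_open_lt (c : ℝ) : IsOpen {p : DoubleArrow | daFst p < c} := by
  rcases lt_or_ge 1 c with hc | hc
  · have : {p : DoubleArrow | daFst p < c} = Set.univ := by
      ext p; simp only [Set.mem_setOf_eq, Set.mem_univ, iff_true]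
      exact lt_of_le_of_lt (daFst_mem p).2 hc
    rw [this]; exact isOpen_univ
  · rw [isOpen_iff_forall_mem_open]
    intro p hp
    have hp' : daFst p < c := hp
    obtain ⟨y, hy1, hy2⟩ := exists_between hp'
    have hy0 : 0 ≤ y := le_trans (daFst_mem p).1 hy1.le
    have hy1' : y ≤ 1 := hy2.le.trans hc
    refine ⟨Set.Iio (toLex ((⟨y, hy0, hy1'⟩ : Set.Icc (0:ℝ) 1), (0 : Fin 2))), ?_, isOpen_Iio, ?_⟩
    · intro q hq
      rcases (Prod.Lex.toLex_lt_toLex (x := ofLex q) (y := (⟨y, hy0, hy1'⟩, (0 : Fin 2)))).mp hq with h | ⟨_, h2⟩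
      · exact lt_trans (show daFst q < y from h) hy2
      · exact absurd h2 (by simp)
    · exact (Prod.Lex.toLex_lt_toLex (x := ofLex p) (y := (⟨y, hy0, hy1'⟩, (0 : Fin 2)))).mpr (Or.inl hy1)

lemma daFst_open_gt (c : ℝ) : IsOpen {p : DoubleArrow | c < daFst p} := by
  rcases lt_or_ge c 0 with hc | hc
  · have : {p : DoubleArrow | c < daFst p} = Set.univ := by
      ext p; simp only [Set.mem_setOf_eq, Set.mem_univ, iff_true]
      exact lt_of_lt_of_le hc (daFst_mem p).1
    rw [this]; exact isOpen_univ
  · rw [isOpen_iff_forall_mem_open]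
    intro p hp
    have hp' : c < daFst p := hp
    obtain ⟨y, hy1, hy2⟩ := exists_between hp'
    have hy0 : 0 ≤ y := hc.trans hy1.le
    have hy1' : y ≤ 1 := hy2.le.trans (daFst_mem p).2
    refine ⟨Set.Ioi (toLex ((⟨y, hy0, hy1'⟩ : Set.Icc (0:ℝ) 1), (1 : Fin 2))), ?_, isOpen_Ioi, ?_⟩
    · intro q hq
      have hq' : toLex ((⟨y, hy0, hy1'⟩ : Set.Icc (0:ℝ) 1), (1 : Fin 2)) < toLex (ofLex q) := hq
      rcases (Prod.Lex.toLex_lt_toLex (y := ofLex q)).mp hq' with h | ⟨h1, _⟩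
      · exact lt_trans hy1 (show y < daFst q from h)
      · have hyq : y = daFst q := congrArg Subtype.val h1
        exact show c < daFst q from hyq ▸ hy1
    · show toLex ((⟨y, hy0, hy1'⟩ : Set.Icc (0:ℝ) 1), (1 : Fin 2)) < toLex (ofLex p)
      exact Prod.Lex.toLex_lt_toLex.mpr (Or.inl hy2)

lemma daFst_preimage_isOpen {s : Set ℝ} (hs : IsOpen s) : IsOpen (daFst ⁻¹' s) := by
  rw [isOpen_iff_forall_mem_open]
  intro p hp
  obtain ⟨ε, hε, hball⟩ := Metric.isOpen_iff.mp hs (daFst p) hp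
  refine ⟨{q | daFst p - ε < daFst q} ∩ {q | daFst q < daFst p + ε}, ?_,
    (daFst_open_gt _).inter (daFst_open_lt _), ?_, ?_⟩
  · rintro q ⟨h1, h2⟩
    apply hball
    rw [Metric.mem_ball, Real.dist_eq, abs_lt]
    constructor <;> simp only [Set.mem_setOf_eq] at h1 h2 <;> linarith
  · simp only [Set.mem_setOf_eq]; linarith
  · simp only [Set.mem_setOf_eq]; linarith

lemma daFst_preimage_isClosed {s : Set ℝ} (hs : IsClosed s) : IsClosed (daFst ⁻¹' s) := by
  rw [← isOpen_compl_iff] at hs ⊢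
  rw [← Set.preimage_compl]
  exact daFst_preimage_isOpen hs

lemma isFsigma_union {X : Type*} [TopologicalSpace X] {A B : Set X}
    (hA : IsFsigma A) (hB : IsFsigma B) : IsFsigma (A ∪ B) := by
  obtain ⟨F, hF, rfl⟩ := hA
  obtain ⟨G, hG, rfl⟩ := hB
  exact ⟨fun n => F n ∪ G n, fun n => (hF n).union (hG n),
    (Set.iUnion_union_distrib F G).symm⟩

/-- Every open subset of `ℝ` is a countable union of closed sets. -/
lemma real_open_eq_iUnion_closed {U : Set ℝ} (hU : IsOpen U) :
    ∃ C : ℕ → Set ℝ, (∀ n, IsClosed (C n)) ∧ U = ⋃ n, C n := by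
  obtain ⟨T, hTopen, hTc, hTeq⟩ := (isClosed_compl_iff.mpr hU : IsClosed Uᶜ).isGδ
  rcases Set.eq_empty_or_nonempty T with rfl | hTne
  · have hUe : U = ∅ := by
      have hc : Uᶜ = Set.univ := by rw [hTeq, Set.sInter_empty]
      rw [← compl_compl U, hc, Set.compl_univ]
    exact ⟨fun _ => ∅, fun _ => isClosed_empty, by simp [hUe]⟩
  · obtain ⟨g, hg⟩ := hTc.exists_eq_range hTne
    refine ⟨fun n => (g n)ᶜ, fun n => isClosed_compl_iff.mpr (hTopen _ (hg ▸ Set.mem_range_self n)), ?_⟩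
    have h1 : Uᶜ = ⋂ n, g n := by rw [hTeq, hg, Set.sInter_range]
    rw [← compl_compl U, h1, Set.compl_iInter]

/-- Every countable subset of `ℝ` is a countable union of closed sets. -/
lemma real_countable_eq_iUnion_closed {D : Set ℝ} (hD : D.Countable) :
    ∃ C : ℕ → Set ℝ, (∀ n, IsClosed (C n)) ∧ D = ⋃ n, C n := by
  rcases Set.eq_empty_or_nonempty D with rfl | hne
  · exact ⟨fun _ => ∅, fun _ => isClosed_empty, by rw [Set.iUnion_empty]⟩
  · obtain ⟨e, he⟩ := hD.exists_eq_range hne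
    exact ⟨fun n => {e n}, fun n => isClosed_singleton, by rw [he, ← Set.range_eq_iUnion]⟩

/-- A set `B ⊆ [0,1]` which together with each point contains a left half-open
interval (relative to `[0,1]`) is the union of an open set and a countable set. -/
lemma left_open_structure {B : Set ℝ} (hsub : B ⊆ Set.Icc 0 1)
    (h : ∀ t ∈ B, ∃ s < t, ∀ y, s < y → y ≤ t → 0 ≤ y → y ∈ B) :
    ∃ U D : Set ℝ, IsOpen U ∧ D.Countable ∧ B = U ∪ D := by
  refine ⟨interior B, B \ interior B, isOpen_interior, ?_,
    (Set.union_diff_cancel interior_subset).symm⟩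
  have hcnt : ((B \ interior B) \ {0}).Countable := by
    have key : ∀ t : ↥((B \ interior B) \ {0}), ∃ q : ℚ,
        (q : ℝ) < (t : ℝ) ∧ 0 ≤ (q : ℝ) ∧ ∀ y, (q : ℝ) < y → y ≤ (t : ℝ) → y ∈ B := by
      rintro ⟨t, ⟨htB, _⟩, ht0⟩
      have htpos : 0 < t := lt_of_le_of_ne (hsub htB).1 (Ne.symm ht0)
      obtain ⟨s, hst, hs⟩ := h t htB
      obtain ⟨q, hq1, hq2⟩ := exists_rat_btwn (show max s 0 < t from max_lt hst htpos)
      refine ⟨q, hq2, le_trans (le_max_right s 0) hq1.le, fun y hy1 hy2 => ?_⟩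
      exact hs y (lt_of_le_of_lt (le_max_left s 0) (hq1.trans hy1)) hy2
        (le_trans (le_trans (le_max_right s 0) hq1.le) hy1.le)
    choose q hq1 hq0 hq3 using key
    have hinj : Function.Injective q := by
      intro t t' hqq
      by_contra hne
      have hne' : (t : ℝ) ≠ (t' : ℝ) := fun hco => hne (Subtype.ext hco)
      rcases hne'.lt_or_gt with hlt | hlt
      · -- t < t' : then t ∈ interior B, contradiction
        have hmem : (t : ℝ) ∈ interior B := by
          refine mem_interior.mpr ⟨Set.Ioo (q t : ℝ) (t' : ℝ), ?_, isOpen_Ioo, ⟨hq1 t, hlt⟩⟩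
          rintro y ⟨h1, h2⟩
          have h1' : (q t' : ℝ) < y := by rw [← hqq]; exact h1
          exact hq3 t' y h1' h2.le
        exact t.2.1.2 hmem
      · have hmem : (t' : ℝ) ∈ interior B := by
          refine mem_interior.mpr ⟨Set.Ioo (q t' : ℝ) (t : ℝ), ?_, isOpen_Ioo, ⟨hq1 t', hlt⟩⟩
          rintro y ⟨h1, h2⟩
          have h1' : (q t : ℝ) < y := by rw [hqq]; exact h1
          exact hq3 t y h1' h2.le
        exact t'.2.1.2 hmem
    exact Set.countable_coe_iff.mp hinj.countable
  have hsubset : B \ interior B ⊆ insert 0 ((B \ interior B) \ {0}) := by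
    intro x hx
    by_cases hx0 : x = 0
    · exact hx0 ▸ Set.mem_insert _ _
    · exact Set.mem_insert_of_mem _ ⟨hx, hx0⟩
  exact (hcnt.insert 0).mono hsubset

/-- The map `r(x,i) = (x,0)` on the double arrow space is of the first Lebesgue class. -/
theorem doubleArrow_retraction_lebesgueClassOne :
    LebesgueClassOne (fun p : DoubleArrow => (toLex ((ofLex p).1, (0 : Fin 2)) : DoubleArrow)) := by
  intro V hV
  set B : Set ℝ :=
    {t : ℝ | ∃ x : Set.Icc (0:ℝ) 1, (x : ℝ) = t ∧ (toLex (x, (0 : Fin 2)) : DoubleArrow) ∈ V}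
    with hBdef
  have hsub : B ⊆ Set.Icc 0 1 := by
    rintro t ⟨x, rfl, -⟩; exact x.2
  have hpre : (fun p : DoubleArrow => (toLex ((ofLex p).1, (0 : Fin 2)) : DoubleArrow)) ⁻¹' V
      = daFst ⁻¹' B := by
    ext p
    constructor
    · intro hp
      exact ⟨(ofLex p).1, rfl, hp⟩
    · rintro ⟨x, hxe, hxV⟩
      have hx : x = (ofLex p).1 := Subtype.ext hxe
      show (toLex ((ofLex p).1, (0 : Fin 2)) : DoubleArrow) ∈ V
      rw [← hx]; exact hxV
  have hprop : ∀ t ∈ B, ∃ s < t, ∀ y, s < y → y ≤ t → 0 ≤ y → y ∈ B := by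
    rintro t ⟨x, rfl, hxV⟩
    by_cases h0 : (x : ℝ) = 0
    · refine ⟨-1, by rw [h0]; norm_num, fun y hy1 hy2 hy3 => ?_⟩
      have hy : y = (x : ℝ) := le_antisymm hy2 (by rw [h0]; exact hy3)
      exact ⟨x, hy.symm, hxV⟩
    · have hxpos : 0 < (x : ℝ) := lt_of_le_of_ne x.2.1 (Ne.symm h0)
      have hl : (toLex ((⟨0, by norm_num⟩ : Set.Icc (0:ℝ) 1), (0 : Fin 2)) : DoubleArrow)
          < toLex (x, (0 : Fin 2)) :=
        Prod.Lex.toLex_lt_toLex.mpr (Or.inl (by exact_mod_cast hxpos))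
      obtain ⟨l', hl', hIoc⟩ := exists_Ioc_subset_of_mem_nhds (hV.mem_nhds hxV) ⟨_, hl⟩
      have hsx : ((ofLex l').1 : ℝ) < (x : ℝ) := by
        have hl'' : toLex (ofLex l') < toLex (x, (0 : Fin 2)) := hl'
        rcases Prod.Lex.toLex_lt_toLex.mp hl'' with h | ⟨-, h2⟩
        · exact_mod_cast h
        · exact absurd h2 (by simp)
      refine ⟨((ofLex l').1 : ℝ), hsx, fun y hy1 hy2 hy3 => ?_⟩
      have hy4 : y ≤ 1 := hy2.trans x.2.2
      have hmem : (toLex ((⟨y, hy3, hy4⟩ : Set.Icc (0:ℝ) 1), (0 : Fin 2)) : DoubleArrow)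
          ∈ Set.Ioc l' (toLex (x, (0 : Fin 2))) := by
        constructor
        · show toLex (ofLex l') < toLex ((⟨y, hy3, hy4⟩ : Set.Icc (0:ℝ) 1), (0 : Fin 2))
          exact Prod.Lex.toLex_lt_toLex.mpr (Or.inl (by exact_mod_cast hy1))
        · rcases lt_or_eq_of_le hy2 with h | h
          · exact le_of_lt (Prod.Lex.toLex_lt_toLex.mpr (Or.inl (by exact_mod_cast h)))
          · exact le_of_eq (by rw [show (⟨y, hy3, hy4⟩ : Set.Icc (0:ℝ) 1) = x from Subtype.ext h])
      exact ⟨⟨y, hy3, hy4⟩, rfl, hIoc hmem⟩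
  obtain ⟨U, D, hUo, hDc, hBUD⟩ := left_open_structure hsub hprop
  obtain ⟨C, hCc, hUC⟩ := real_open_eq_iUnion_closed hUo
  obtain ⟨G, hGc, hDG⟩ := real_countable_eq_iUnion_closed hDc
  rw [hpre, hBUD, Set.preimage_union]
  apply isFsigma_union
  · exact ⟨fun n => daFst ⁻¹' C n, fun n => daFst_preimage_isClosed (hCc n),
      by rw [hUC, Set.preimage_iUnion]⟩
  · exact ⟨fun n => daFst ⁻¹' G n, fun n => daFst_preimage_isClosed (hGc n),
      by rw [hDG, Set.preimage_iUnion]⟩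
end
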